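/- At the solution λ₁ = 48π²ε/13, λ₂ = λ₃ = 0 (the O(5) Wilson–Fisher point), the Jacobian ∂β_i/∂λ_j of the one-loop beta functions has eigenvalues ε, −ε/13, −ε/13. -/

import Mathlib

open Real Polynomial

/-- The one-loop beta functions of the `(ℤ₂)⁴:ℤ₅` Landau theory. -/
noncomputable def beta (ε : ℝ) : Fin 3 → (Fin 3 → ℝ) → ℝ :=
  ![fun l => -ε * l 0 + 13 * l 0 ^ 2 / (48 * π ^ 2) + l 0 * l 1 / (8 * π ^ 2)
      + l 0 * l 2 / (24 * π ^ 2) + l 2 ^ 2 / (192 * π ^ 2),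
    fun l => -ε * l 1 + 3 * l 1 ^ 2 / (16 * π ^ 2) + l 0 * l 1 / (4 * π ^ 2)
      + l 2 ^ 2 / (192 * π ^ 2),
    fun l => -ε * l 2 + l 2 ^ 2 / (32 * π ^ 2) + l 1 * l 2 / (8 * π ^ 2)
      + l 0 * l 2 / (4 * π ^ 2)]

/-- The Jacobian matrix `∂βᵢ/∂λⱼ` of the beta functions at the point `p`. -/
noncomputable def jacobian (ε : ℝ) (p : Fin 3 → ℝ) : Matrix (Fin 3) (Fin 3) ℝ :=
  Matrix.of fun i j => fderiv ℝ (beta ε i) p (Pi.single j 1)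

private lemma hc' (j : Fin 3) (p : Fin 3 → ℝ) :
    HasFDerivAt (fun l : Fin 3 → ℝ => l j)
      (ContinuousLinearMap.proj j : (Fin 3 → ℝ) →L[ℝ] ℝ) p :=
  ((ContinuousLinearMap.proj j : (Fin 3 → ℝ) →L[ℝ] ℝ)).hasFDerivAt

private lemma hdivc' {f : (Fin 3 → ℝ) → ℝ} {f' : (Fin 3 → ℝ) →L[ℝ] ℝ} {p : Fin 3 → ℝ}
    (h : HasFDerivAt f f' p) (c : ℝ) :
    HasFDerivAt (fun y => f y / c) (c⁻¹ • f') p := by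
  simpa [div_eq_mul_inv] using h.mul_const c⁻¹

private lemma hsq' {f : (Fin 3 → ℝ) → ℝ} {f' : (Fin 3 → ℝ) →L[ℝ] ℝ} {p : Fin 3 → ℝ}
    (h : HasFDerivAt f f' p) :
    HasFDerivAt (fun y => f y ^ 2) ((2 * f p) • f') p := by
  have h2 : HasFDerivAt (fun y => f y * f y) (f p • f' + f p • f') p := by exact h.mul h
  simpa [pow_two, two_mul, add_smul] using h2

private lemma jac_eq (ε : ℝ) :
    jacobian ε ![48 * π ^ 2 * ε / 13, 0, 0] =
      !![ε, 6 * ε / 13, 2 * ε / 13; 0, -ε / 13, 0; 0, 0, -ε / 13] := by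
  set p : Fin 3 → ℝ := ![48 * π ^ 2 * ε / 13, 0, 0] with hp
  have hpi : π ^ 2 ≠ 0 := pow_ne_zero _ pi_ne_zero
  have h0 := ((((hc' 0 p).const_mul (-ε)).add
      (hdivc' ((hsq' (hc' 0 p)).const_mul 13) (48 * π ^ 2))).add
    (hdivc' ((hc' 0 p).mul (hc' 1 p)) (8 * π ^ 2))).add
      (hdivc' ((hc' 0 p).mul (hc' 2 p)) (24 * π ^ 2))
    |>.add (hdivc' (hsq' (hc' 2 p)) (192 * π ^ 2))
  have h1 := ((((hc' 1 p).const_mul (-ε)).add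
      (hdivc' ((hsq' (hc' 1 p)).const_mul 3) (16 * π ^ 2))).add
    (hdivc' ((hc' 0 p).mul (hc' 1 p)) (4 * π ^ 2))).add
      (hdivc' (hsq' (hc' 2 p)) (192 * π ^ 2))
  have h2 := ((((hc' 2 p).const_mul (-ε)).add
      (hdivc' (hsq' (hc' 2 p)) (32 * π ^ 2))).add
    (hdivc' ((hc' 1 p).mul (hc' 2 p)) (8 * π ^ 2))).add
      (hdivc' ((hc' 0 p).mul (hc' 2 p)) (4 * π ^ 2))
  have hb0 : beta ε 0 = fun l => -ε * l 0 + 13 * l 0 ^ 2 / (48 * π ^ 2) + l 0 * l 1 / (8 * π ^ 2)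
      + l 0 * l 2 / (24 * π ^ 2) + l 2 ^ 2 / (192 * π ^ 2) := rfl
  have hb1 : beta ε 1 = fun l => -ε * l 1 + 3 * l 1 ^ 2 / (16 * π ^ 2) + l 0 * l 1 / (4 * π ^ 2)
      + l 2 ^ 2 / (192 * π ^ 2) := rfl
  have hb2 : beta ε 2 = fun l => -ε * l 2 + l 2 ^ 2 / (32 * π ^ 2) + l 1 * l 2 / (8 * π ^ 2)
      + l 0 * l 2 / (4 * π ^ 2) := rfl
  have hp0 : p 0 = 48 * π ^ 2 * ε / 13 := rfl
  have hp1 : p 1 = 0 := rfl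
  have hp2 : p 2 = 0 := rfl
  have e00 : jacobian ε p 0 0 = ε := by
    simp only [jacobian, Matrix.of_apply, hb0]
    erw [h0.fderiv]
    simp only [ContinuousLinearMap.add_apply, ContinuousLinearMap.smul_apply,
      ContinuousLinearMap.proj_apply, smul_eq_mul, hp0, hp1, hp2, Pi.single_apply]
    norm_num [Fin.ext_iff]
    all_goals field_simp
    all_goals ring
  have e01 : jacobian ε p 0 1 = 6 * ε / 13 := by
    simp only [jacobian, Matrix.of_apply, hb0]
    erw [h0.fderiv]
    simp only [ContinuousLinearMap.add_apply, ContinuousLinearMap.smul_apply,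
      ContinuousLinearMap.proj_apply, smul_eq_mul, hp0, hp1, hp2, Pi.single_apply]
    norm_num [Fin.ext_iff]
    all_goals field_simp
    all_goals ring
  have e02 : jacobian ε p 0 2 = 2 * ε / 13 := by
    simp only [jacobian, Matrix.of_apply, hb0]
    erw [h0.fderiv]
    simp only [ContinuousLinearMap.add_apply, ContinuousLinearMap.smul_apply,
      ContinuousLinearMap.proj_apply, smul_eq_mul, hp0, hp1, hp2, Pi.single_apply]
    norm_num [Fin.ext_iff]
    all_goals field_simp
    all_goals ring
  have e10 : jacobian ε p 1 0 = (0:ℝ) := by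
    simp only [jacobian, Matrix.of_apply, hb1]
    erw [h1.fderiv]
    simp only [ContinuousLinearMap.add_apply, ContinuousLinearMap.smul_apply,
      ContinuousLinearMap.proj_apply, smul_eq_mul, hp0, hp1, hp2, Pi.single_apply]
    norm_num [Fin.ext_iff]
    all_goals field_simp
    all_goals ring
  have e11 : jacobian ε p 1 1 = -ε / 13 := by
    simp only [jacobian, Matrix.of_apply, hb1]
    erw [h1.fderiv]
    simp only [ContinuousLinearMap.add_apply, ContinuousLinearMap.smul_apply,
      ContinuousLinearMap.proj_apply, smul_eq_mul, hp0, hp1, hp2, Pi.single_apply]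
    norm_num [Fin.ext_iff]
    all_goals field_simp
    all_goals ring
  have e12 : jacobian ε p 1 2 = (0:ℝ) := by
    simp only [jacobian, Matrix.of_apply, hb1]
    erw [h1.fderiv]
    simp only [ContinuousLinearMap.add_apply, ContinuousLinearMap.smul_apply,
      ContinuousLinearMap.proj_apply, smul_eq_mul, hp0, hp1, hp2, Pi.single_apply]
    norm_num [Fin.ext_iff]
    all_goals field_simp
    all_goals ring
  have e20 : jacobian ε p 2 0 = (0:ℝ) := by
    simp only [jacobian, Matrix.of_apply, hb2]
    erw [h2.fderiv]
    simp only [ContinuousLinearMap.add_apply, ContinuousLinearMap.smul_apply,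
      ContinuousLinearMap.proj_apply, smul_eq_mul, hp0, hp1, hp2, Pi.single_apply]
    norm_num [Fin.ext_iff]
    all_goals field_simp
    all_goals ring
  have e21 : jacobian ε p 2 1 = (0:ℝ) := by
    simp only [jacobian, Matrix.of_apply, hb2]
    erw [h2.fderiv]
    simp only [ContinuousLinearMap.add_apply, ContinuousLinearMap.smul_apply,
      ContinuousLinearMap.proj_apply, smul_eq_mul, hp0, hp1, hp2, Pi.single_apply]
    norm_num [Fin.ext_iff]
    all_goals field_simp
    all_goals ring
  have e22 : jacobian ε p 2 2 = -ε / 13 := by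
    simp only [jacobian, Matrix.of_apply, hb2]
    erw [h2.fderiv]
    simp only [ContinuousLinearMap.add_apply, ContinuousLinearMap.smul_apply,
      ContinuousLinearMap.proj_apply, smul_eq_mul, hp0, hp1, hp2, Pi.single_apply]
    norm_num [Fin.ext_iff]
    all_goals field_simp
    all_goals ring
  rw [Matrix.eta_fin_three (jacobian ε p), e00, e01, e02, e10, e11, e12, e20, e21, e22]

/-- At the O(5) Wilson–Fisher point `λ₁ = 48π²ε/13`, `λ₂ = λ₃ = 0`, the Jacobian
`∂βᵢ/∂λⱼ` has eigenvalues `ε`, `−ε/13`, `−ε/13`: its characteristic polynomial is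
`(X−ε)(X+ε/13)²`. -/
theorem stmt_12 (ε : ℝ) (hε : ε > 0) :
    (jacobian ε ![48 * π ^ 2 * ε / 13, 0, 0]).charpoly =
      (X - C ε) * (X - C (-ε / 13)) ^ 2 := by
  rw [jac_eq, Matrix.charpoly, Matrix.det_fin_three]
  simp [Matrix.charmatrix_apply, Matrix.vecHead, Matrix.vecTail]
  ring
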